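/- For the standard β-Hölder triangle T_β = {(x,y) ∈ ℝ² : 0 ≤ x ≤ 1, 0 ≤ y ≤ x^β} with β ≥ 1, and any two points p = (x₁,y₁), q = (x₂,y₂) in T_β, the inner distance (infimum of lengths of rectifiable paths in T_β joining p and q) is at most C·‖p - q‖ for some constant C depending only on β. In particular T_β is Lipschitz normally embedded. -/

import Mathlib

open Set
open scoped ENNReal NNReal

/-- The standard β-Hölder triangle `T_β = {(x,y) : 0 ≤ x ≤ 1, 0 ≤ y ≤ x^β}`. -/
def holderTriangle (β : ℝ) : Set (ℝ × ℝ) :=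
  {p | 0 ≤ p.1 ∧ p.1 ≤ 1 ∧ 0 ≤ p.2 ∧ p.2 ≤ p.1 ^ β}

/-- Inner distance in a subset `S`: the infimum of the lengths (total variations) of
continuous paths in `S` joining `p` and `q`. -/
noncomputable def innerDist (S : Set (ℝ × ℝ)) (p q : ℝ × ℝ) : ENNReal :=
  ⨅ (γ : ℝ → ℝ × ℝ) (_ : ContinuousOn γ (Set.Icc 0 1))
    (_ : Set.MapsTo γ (Set.Icc 0 1) S) (_ : γ 0 = p) (_ : γ 1 = q),
      eVariationOn γ (Set.Icc 0 1)

/-- `x ↦ β * x - x ^ β` is monotone on `[0,1]` for `β ≥ 1`. -/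
lemma aux_mono (β : ℝ) (hβ : 1 ≤ β) :
    MonotoneOn (fun x : ℝ => β * x - x ^ β) (Icc 0 1) := by
  have hdiff : Differentiable ℝ (fun x : ℝ => β * x - x ^ β) := by
    exact (differentiable_id.const_mul β).sub (Real.differentiable_rpow_const hβ)
  apply monotoneOn_of_deriv_nonneg (convex_Icc 0 1) hdiff.continuous.continuousOn
    hdiff.differentiableOn
  intro x hx
  rw [interior_Icc] at hx
  have hd : HasDerivAt (fun x : ℝ => β * x - x ^ β) (β * 1 - β * x ^ (β - 1)) x := by
    exact ((hasDerivAt_id x).const_mul β).sub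
      (Real.hasDerivAt_rpow_const (p := β) (Or.inl (ne_of_gt hx.1)))
  rw [hd.deriv]
  have h1 : x ^ (β - 1) ≤ 1 :=
    Real.rpow_le_one hx.1.le hx.2.le (by linarith)
  nlinarith [hx.1]

/-- Lipschitz estimate for `rpow` on `[0,1]`. -/
lemma aux_rpow_lip (β : ℝ) (hβ : 1 ≤ β) {a b : ℝ} (ha : a ∈ Icc (0:ℝ) 1)
    (hb : b ∈ Icc (0:ℝ) 1) : |a ^ β - b ^ β| ≤ β * |a - b| := by
  have key : ∀ u v : ℝ, u ∈ Icc (0:ℝ) 1 → v ∈ Icc (0:ℝ) 1 → v ≤ u →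
      u ^ β - v ^ β ≤ β * (u - v) := by
    intro u v hu hv hvu
    have := aux_mono β hβ hv hu hvu
    simp only at this
    linarith
  rcases le_total b a with h | h
  · have h1 := key a b ha hb h
    have h2 : b ^ β ≤ a ^ β := Real.rpow_le_rpow hb.1 h (by linarith)
    rw [abs_of_nonneg (by linarith), abs_of_nonneg (by linarith)]
    linarith
  · have h1 := key b a hb ha h
    have h2 : a ^ β ≤ b ^ β := Real.rpow_le_rpow ha.1 h (by linarith)
    rw [abs_of_nonpos (by linarith), abs_of_nonpos (by linarith)]
    linarith

/-- For `β ≥ 1`, the standard β-Hölder triangle is Lipschitz normally embedded: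
there is `C ≥ 1` such that the inner distance between any two of its points is at most
`C` times their Euclidean distance. -/
theorem stmt8 (β : ℝ) (hβ : 1 ≤ β) :
    ∃ C : ℝ, 1 ≤ C ∧ ∀ p ∈ holderTriangle β, ∀ q ∈ holderTriangle β,
      innerDist (holderTriangle β) p q ≤ ENNReal.ofReal (C * dist p q) := by
  refine ⟨β, hβ, ?_⟩
  rintro ⟨x₁, y₁⟩ ⟨hx₁0, hx₁1, hy₁0, hy₁⟩ ⟨x₂, y₂⟩ ⟨hx₂0, hx₂1, hy₂0, hy₂⟩
  dsimp only at hx₁0 hx₁1 hy₁0 hy₁ hx₂0 hx₂1 hy₂0 hy₂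
  set p : ℝ × ℝ := (x₁, y₁) with hp
  set q : ℝ × ℝ := (x₂, y₂) with hq
  set X : ℝ → ℝ := fun t => x₁ + t * (x₂ - x₁) with hX
  set Y : ℝ → ℝ := fun t => min (y₁ + t * (y₂ - y₁)) ((X t) ^ β) with hY
  set γ : ℝ → ℝ × ℝ := fun t => (X t, Y t) with hγ
  have hd0 : (0:ℝ) ≤ dist p q := dist_nonneg
  have hdx : |x₂ - x₁| ≤ dist p q := by
    rw [Prod.dist_eq]
    exact le_max_of_le_left (by rw [Real.dist_eq, abs_sub_comm])
  have hdy : |y₂ - y₁| ≤ dist p q := by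
    rw [Prod.dist_eq]
    exact le_max_of_le_right (by rw [Real.dist_eq, abs_sub_comm])
  -- X maps [0,1] to [0,1]
  have hXmem : ∀ t ∈ Icc (0:ℝ) 1, X t ∈ Icc (0:ℝ) 1 := by
    rintro t ⟨ht0, ht1⟩
    constructor
    · have : X t = (1 - t) * x₁ + t * x₂ := by ring
      rw [this]
      nlinarith [mul_nonneg (sub_nonneg.2 ht1) hx₁0, mul_nonneg ht0 hx₂0]
    · have : X t = (1 - t) * x₁ + t * x₂ := by ring
      rw [this]
      nlinarith
  -- Lipschitz bound
  have hLip : LipschitzOnWith (β * dist p q).toNNReal γ (Icc 0 1) := by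
    apply LipschitzOnWith.of_dist_le_mul
    intro s hs t ht
    rw [Real.coe_toNNReal _ (by positivity)]
    rw [Prod.dist_eq]
    have hst : dist s t = |s - t| := Real.dist_eq s t
    apply max_le
    · rw [Real.dist_eq]
      have : X s - X t = (x₂ - x₁) * (s - t) := by simp only [hX]; ring
      rw [this, abs_mul, hst]
      have h1 : |x₂ - x₁| * |s - t| ≤ dist p q * |s - t| :=
        mul_le_mul_of_nonneg_right hdx (abs_nonneg _)
      nlinarith [abs_nonneg (s - t), hd0,
        mul_nonneg (mul_nonneg (sub_nonneg.2 hβ) hd0) (abs_nonneg (s - t))]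
    · rw [Real.dist_eq]
      have hmin : |Y s - Y t| ≤
          max |(y₁ + s * (y₂ - y₁)) - (y₁ + t * (y₂ - y₁))| |(X s) ^ β - (X t) ^ β| :=
        abs_min_sub_min_le_max _ _ _ _
      apply hmin.trans
      apply max_le
      · have : (y₁ + s * (y₂ - y₁)) - (y₁ + t * (y₂ - y₁)) = (y₂ - y₁) * (s - t) := by ring
        rw [this, abs_mul, hst]
        have h1 : |y₂ - y₁| * |s - t| ≤ dist p q * |s - t| :=
          mul_le_mul_of_nonneg_right hdy (abs_nonneg _)
        nlinarith [abs_nonneg (s - t), hd0,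
          mul_nonneg (mul_nonneg (sub_nonneg.2 hβ) hd0) (abs_nonneg (s - t))]
      · have h1 : |(X s) ^ β - (X t) ^ β| ≤ β * |X s - X t| :=
          aux_rpow_lip β hβ (hXmem s hs) (hXmem t ht)
        have h2 : X s - X t = (x₂ - x₁) * (s - t) := by simp only [hX]; ring
        rw [h2, abs_mul] at h1
        rw [hst]
        have h3 : |x₂ - x₁| * |s - t| ≤ dist p q * |s - t| :=
          mul_le_mul_of_nonneg_right hdx (abs_nonneg _)
        nlinarith [abs_nonneg (s - t), hd0]
  have hcont : ContinuousOn γ (Icc 0 1) := hLip.continuousOn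
  have hmaps : MapsTo γ (Icc 0 1) (holderTriangle β) := by
    intro t ht
    obtain ⟨hX0, hX1⟩ := hXmem t ht
    refine ⟨hX0, hX1, ?_, min_le_right _ _⟩
    apply le_min
    · obtain ⟨ht0, ht1⟩ := ht
      have : y₁ + t * (y₂ - y₁) = (1 - t) * y₁ + t * y₂ := by ring
      rw [this]
      nlinarith [mul_nonneg (sub_nonneg.2 ht1) hy₁0, mul_nonneg ht0 hy₂0]
    · exact Real.rpow_nonneg hX0 β
  have h0 : γ 0 = p := by
    simp only [hγ, hX, hY, hp, zero_mul, add_zero]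
    rw [min_eq_left hy₁]
  have h1 : γ 1 = q := by
    simp only [hγ, hX, hY, hq, one_mul]
    have hx : x₁ + (x₂ - x₁) = x₂ := by ring
    have hy : y₁ + (y₂ - y₁) = y₂ := by ring
    rw [hx, hy, min_eq_left hy₂]
  -- variation bound
  have hvar : eVariationOn γ (Icc 0 1) ≤ ENNReal.ofReal (β * dist p q) := by
    have hid : eVariationOn (id : ℝ → ℝ) (Icc 0 1) ≤ 1 := by
      have := (monotoneOn_id (s := Icc (0:ℝ) 1)).eVariationOn_le
        (a := 0) (b := 1) (by simp) (by simp)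
      rw [Set.inter_self] at this
      simpa using this
    have hcomp := hLip.comp_eVariationOn_le (g := (id : ℝ → ℝ)) (s := Icc 0 1)
      (mapsTo_id _)
    have hγid : γ ∘ (id : ℝ → ℝ) = γ := rfl
    rw [hγid] at hcomp
    calc eVariationOn γ (Icc 0 1)
        ≤ ((β * dist p q).toNNReal : ℝ≥0∞) * eVariationOn (id : ℝ → ℝ) (Icc 0 1) := hcomp
      _ ≤ ((β * dist p q).toNNReal : ℝ≥0∞) * 1 := by
          gcongr
      _ = ENNReal.ofReal (β * dist p q) := by
          rw [mul_one]; rfl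
  calc innerDist (holderTriangle β) p q ≤ eVariationOn γ (Icc 0 1) := by
        exact iInf_le_of_le γ (iInf_le_of_le hcont (iInf_le_of_le hmaps
          (iInf_le_of_le h0 (iInf_le _ h1))))
    _ ≤ ENNReal.ofReal (β * dist p q) := hvar
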